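/- Let λ ∈ k with λ ≠ 0, λ ≠ 1 and λ ≠ −1, and let a ∈ k with a ≠ 0. Then the O-module Ω(λ,a) is irreducible. -/

import Mathlib

set_option linter.unusedSectionVars false

namespace OmegaIrr
open Polynomial

variable {k : Type*} [Field k] [CharZero k]



lemma leadingCoeff_taylor' {R : Type*} [CommRing R] [IsDomain R] (r : R) (p : R[X]) :
    (taylor r p).leadingCoeff = p.leadingCoeff := by
  rcases eq_or_ne p 0 with rfl | hp
  · simp
  · rw [taylor_apply, leadingCoeff_comp (by simp [natDegree_X_add_C]),
      (monic_X_add_C r).leadingCoeff, one_pow, mul_one]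

lemma taylor_ne_zero' {R : Type*} [CommRing R] [IsDomain R] (r : R) {p : R[X]} (hp : p ≠ 0) :
    taylor r p ≠ 0 := by
  intro h
  apply hp
  rw [← leadingCoeff_eq_zero, ← leadingCoeff_taylor' r p, h, leadingCoeff_zero]

lemma degree_taylor' {R : Type*} [CommRing R] [IsDomain R] (r : R) (p : R[X]) :
    (taylor r p).degree = p.degree := by
  rcases eq_or_ne p 0 with rfl | hp
  · simp
  · rw [degree_eq_natDegree (taylor_ne_zero' r hp), degree_eq_natDegree hp, natDegree_taylor]

lemma taylor_coeff_top' {R : Type*} [CommRing R] [IsDomain R] (r : R) (p : R[X]) {e : ℕ}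
    (h : p.natDegree ≤ e) : (taylor r p).coeff e = p.coeff e := by
  rcases eq_or_lt_of_le h with h | h
  · have h1 : (taylor r p).natDegree = e := by rw [natDegree_taylor, ← h]
    rw [← h1, coeff_natDegree, leadingCoeff_taylor', h1, ← h, coeff_natDegree]
  · rw [coeff_eq_zero_of_natDegree_lt h, coeff_eq_zero_of_natDegree_lt (by rwa [natDegree_taylor])]

lemma phase1 (lam : k) (hl0 : lam ≠ 0) (hll : lam - lam⁻¹ ≠ 0)
    (N : Submodule k (Polynomial k)) :
    ∀ (m : ℕ) (A B : Polynomial (Polynomial k)), B.natDegree < m →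
    (∀ n : ℕ, 1 ≤ n →
      lam ^ n • A.eval (C (n : k)) + (lam⁻¹) ^ n • B.eval (C (n : k)) ∈ N) →
    ∃ (A' : Polynomial (Polynomial k)) (c : k), c ≠ 0 ∧
      (∀ n : ℕ, 1 ≤ n → A'.eval (C (n : k)) ∈ N) ∧
      ∀ e : ℕ, A.natDegree ≤ e → A'.natDegree ≤ e ∧ A'.coeff e = c • A.coeff e := by
  intro m
  induction m with
  | zero => intro A B h; omega
  | succ m ih =>
    intro A B hB hmem
    set A₁ : Polynomial (Polynomial k) :=
      C (C lam) * taylor (1 : Polynomial k) A - C (C lam⁻¹) * A with hA₁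
    set B₁ : Polynomial (Polynomial k) :=
      C (C lam⁻¹) * taylor (1 : Polynomial k) B - C (C lam⁻¹) * B with hB₁
    have hev : ∀ (P : Polynomial (Polynomial k)) (n : ℕ),
        (taylor (1 : Polynomial k) P).eval (C (n : k)) = P.eval (C ((n + 1 : ℕ) : k)) := by
      intro P n
      rw [taylor_apply, eval_comp]
      push_cast
      simp [eval_add]
    have hmem₁ : ∀ n : ℕ, 1 ≤ n →
        lam ^ n • A₁.eval (C (n : k)) + (lam⁻¹) ^ n • B₁.eval (C (n : k)) ∈ N := by
      intro n hn
      have key : lam ^ n • A₁.eval (C (n : k)) + (lam⁻¹) ^ n • B₁.eval (C (n : k)) =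
          (lam ^ (n+1) • A.eval (C ((n+1 : ℕ) : k)) +
            (lam⁻¹) ^ (n+1) • B.eval (C ((n+1 : ℕ) : k)))
          - lam⁻¹ • (lam ^ n • A.eval (C (n : k)) + (lam⁻¹) ^ n • B.eval (C (n : k))) := by
        rw [hA₁, hB₁]
        simp only [eval_sub, eval_mul, eval_C, hev]
        simp only [← smul_eq_C_mul]
        module
      rw [key]
      exact Submodule.sub_mem _ (hmem (n+1) (by omega)) (Submodule.smul_mem _ _ (hmem n hn))
    have hA₁deg : ∀ e, A.natDegree ≤ e →
        A₁.natDegree ≤ e ∧ A₁.coeff e = (lam - lam⁻¹) • A.coeff e := by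
      intro e he
      constructor
      · refine (natDegree_sub_le _ _).trans (max_le ?_ ?_)
        · exact (natDegree_C_mul_le _ _).trans (by rw [natDegree_taylor]; exact he)
        · exact (natDegree_C_mul_le _ _).trans he
      · rw [hA₁, coeff_sub, coeff_C_mul, coeff_C_mul, taylor_coeff_top' _ _ he, sub_smul,
          smul_eq_C_mul, smul_eq_C_mul]
    by_cases hB0 : B.natDegree = 0
    · have hBC : B = C (B.coeff 0) := eq_C_of_natDegree_eq_zero hB0
      have hB₁0 : B₁ = 0 := by rw [hB₁, hBC, taylor_C, sub_self]
      refine ⟨A₁, lam - lam⁻¹, hll, ?_, hA₁deg⟩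
      intro n hn
      have h1 := hmem₁ n hn
      rw [hB₁0] at h1
      simp only [eval_zero, smul_zero, add_zero] at h1
      have h2 : A₁.eval (C (n : k)) = (lam ^ n)⁻¹ • (lam ^ n • A₁.eval (C (n : k))) := by
        rw [smul_smul, inv_mul_cancel₀ (pow_ne_zero _ hl0), one_smul]
      rw [h2]
      exact Submodule.smul_mem _ _ h1
    · have hBne : B ≠ 0 := fun h => hB0 (by simp [h])
      have hmpos : 1 ≤ m := by
        have : 1 ≤ B.natDegree := Nat.one_le_iff_ne_zero.mpr hB0
        omega
      have hBd1 : B₁.natDegree < m := by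
        have hsub : B₁ = C (C lam⁻¹) * (taylor (1 : Polynomial k) B - B) := by
          rw [hB₁, mul_sub]
        by_cases hzero : taylor (1 : Polynomial k) B - B = 0
        · rw [hsub, hzero, mul_zero]
          simp only [natDegree_zero]; exact hmpos
        · have hdeg : (taylor (1 : Polynomial k) B - B).degree < B.degree := by
            have h6 := degree_sub_lt (degree_taylor' (1 : Polynomial k) B)
              (taylor_ne_zero' _ hBne) (leadingCoeff_taylor' _ _)
            rwa [degree_taylor'] at h6
          have h5 := natDegree_lt_natDegree hzero hdeg
          calc B₁.natDegree ≤ (taylor (1 : Polynomial k) B - B).natDegree := by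
                rw [hsub]; exact natDegree_C_mul_le _ _
          _ < B.natDegree := h5
          _ ≤ m := by omega
      obtain ⟨A', c, hc, hmem', hcoeff⟩ := ih A₁ B₁ hBd1 hmem₁
      refine ⟨A', c * (lam - lam⁻¹), mul_ne_zero hc hll, hmem', ?_⟩
      intro e he
      obtain ⟨h1, h2⟩ := hA₁deg e he
      obtain ⟨h3, h4⟩ := hcoeff e h1
      exact ⟨h3, by rw [h4, h2, smul_smul]⟩



lemma coeff_mem_of_eval_mem (N : Submodule k (Polynomial k)) {A : Polynomial (Polynomial k)}
    {m : ℕ} (hd : A.natDegree < m)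
    (h : ∀ n : ℕ, 1 ≤ n → A.eval (C (n : k)) ∈ N) (i : ℕ) : A.coeff i ∈ N := by
  rcases lt_or_ge i m with him | him
  swap
  · rw [coeff_eq_zero_of_natDegree_lt (lt_of_lt_of_le hd him)]
    exact N.zero_mem
  set x : Fin m → k := fun j => ((j : ℕ) : k) + 1 with hx
  have hxinj : Function.Injective x := by
    intro j1 j2 hj
    rw [hx] at hj
    simp only [add_left_inj, Nat.cast_inj] at hj
    exact Fin.ext hj
  set V : Matrix (Fin m) (Fin m) k := Matrix.vandermonde x with hV
  have hdet : IsUnit V.det := by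
    rw [isUnit_iff_ne_zero, hV, Ne, Matrix.det_vandermonde_eq_zero_iff]
    push_neg
    intro j1 j2 hj
    exact hxinj hj
  have hw : ∀ j : Fin m, A.eval (C (x j)) = ∑ i' : Fin m, V j (i' : Fin m) • A.coeff (i' : ℕ) := by
    intro j
    rw [eval_eq_sum_range' hd,
      ← Fin.sum_univ_eq_sum_range (fun i' => A.coeff i' * (C (x j)) ^ i') m]
    refine Finset.sum_congr rfl fun i' _ => ?_
    rw [hV, Matrix.vandermonde_apply, smul_eq_C_mul, ← C_pow, mul_comm]
  have hv : A.coeff i = ∑ j : Fin m, (V⁻¹ ⟨i, him⟩ j) • A.eval (C (x j)) := by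
    have h1 : ∀ j : Fin m, (V⁻¹ ⟨i, him⟩ j) • A.eval (C (x j)) =
        ∑ i' : Fin m, (V⁻¹ ⟨i, him⟩ j * V j i') • A.coeff (i' : ℕ) := by
      intro j
      rw [hw j, Finset.smul_sum]
      simp_rw [smul_smul]
    rw [Finset.sum_congr rfl fun j _ => h1 j, Finset.sum_comm]
    have h2 : ∀ i' : Fin m, (∑ j : Fin m, (V⁻¹ ⟨i, him⟩ j * V j i') • A.coeff (i' : ℕ)) =
        ((1 : Matrix (Fin m) (Fin m) k) ⟨i, him⟩ i') • A.coeff (i' : ℕ) := by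
      intro i'
      rw [← Finset.sum_smul, ← Matrix.mul_apply, Matrix.nonsing_inv_mul V hdet]
    rw [Finset.sum_congr rfl fun i' _ => h2 i']
    simp [Matrix.one_apply]
  rw [hv]
  refine Submodule.sum_mem _ fun j _ => Submodule.smul_mem _ _ ?_
  have h3 := h ((j : ℕ) + 1) (by omega)
  have h4 : ((((j : ℕ) + 1 : ℕ)) : k) = x j := by push_cast [hx]; ring
  rwa [h4] at h3



noncomputable def φ (k : Type*) [Field k] : k →+* Polynomial (Polynomial k) :=
  (C : Polynomial k →+* Polynomial (Polynomial k)).comp (C : k →+* Polynomial k)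

lemma eval_eval₂ (q : Polynomial (Polynomial k)) (c : k) (f : Polynomial k) :
    (f.eval₂ (φ k) q).eval (C c) = f.comp (q.eval (C c)) := by
  have h1 := hom_eval₂ f (φ k) (evalRingHom (C c : Polynomial k)) q
  simp only [coe_evalRingHom] at h1
  rw [h1]
  have h2 : (evalRingHom (C c : Polynomial k)).comp (φ k) = (C : k →+* Polynomial k) := by
    ext t
    simp [φ]
  rw [h2]
  rfl

lemma natDegree_eval₂_le (q : Polynomial (Polynomial k)) (hq : q.natDegree ≤ 1)
    (f : Polynomial k) : (f.eval₂ (φ k) q).natDegree ≤ f.natDegree := by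
  rw [eval₂_eq_sum, sum_def]
  refine natDegree_sum_le_of_forall_le _ _ fun i hi => ?_
  refine (natDegree_mul_le).trans ?_
  have h1 : ((φ k) (f.coeff i)).natDegree = 0 := by simp [φ]
  have h2 : (q ^ i).natDegree ≤ i := natDegree_pow_le.trans (by
    calc i * q.natDegree ≤ i * 1 := Nat.mul_le_mul_left i hq
    _ = i := Nat.mul_one i)
  have h3 : i ≤ f.natDegree := le_natDegree_of_mem_supp i hi
  omega

lemma coeff_eval₂_top (r : Polynomial k) {f : Polynomial k} (hf : f ≠ 0) :
    (f.eval₂ (φ k) (X + C r)).coeff f.natDegree = C f.leadingCoeff := by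
  rw [eval₂_eq_sum, sum_def, finset_sum_coeff]
  rw [Finset.sum_eq_single_of_mem f.natDegree (by
    rw [mem_support_iff, ← leadingCoeff]; exact leadingCoeff_ne_zero.mpr hf)]
  · have hm : ((X + C r) ^ f.natDegree : Polynomial (Polynomial k)).Monic :=
      (monic_X_add_C r).pow _
    have hd : ((X + C r) ^ f.natDegree : Polynomial (Polynomial k)).natDegree = f.natDegree := by
      rw [Monic.natDegree_pow (monic_X_add_C r), natDegree_X_add_C, mul_one]
    have h4 : ((X + C r) ^ f.natDegree : Polynomial (Polynomial k)).coeff f.natDegree = 1 := by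
      have h7 := hm.coeff_natDegree
      rwa [hd] at h7
    simp only [φ, RingHom.coe_comp, Function.comp_apply]
    rw [coeff_C_mul, h4, mul_one, ← leadingCoeff]
  · intro i hi hine
    have h5 : i < f.natDegree := lt_of_le_of_ne (le_natDegree_of_mem_supp i hi) hine
    have h6 : ((X + C r) ^ i : Polynomial (Polynomial k)).natDegree < f.natDegree := by
      rw [Monic.natDegree_pow (monic_X_add_C r), natDegree_X_add_C, mul_one]; exact h5
    simp only [φ, RingHom.coe_comp, Function.comp_apply]
    rw [coeff_C_mul, coeff_eq_zero_of_natDegree_lt h6, mul_zero]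

lemma setup (a lam : k) (f : Polynomial k) (hf : f ≠ 0) :
    ∃ A0 B0 : Polynomial (Polynomial k),
      A0.natDegree ≤ f.natDegree + 1 ∧ B0.natDegree ≤ f.natDegree + 1 ∧
      A0.coeff (f.natDegree + 1) = C (a * f.leadingCoeff) ∧
      ∀ n : ℕ, lam ^ n • A0.eval (C (n : k)) + (lam⁻¹) ^ n • B0.eval (C (n : k)) =
        lam ^ n • ((X + C ((n : k) * a)) * f.comp (X + C (n : k)))
          - (lam ^ n)⁻¹ • ((X - C ((n : k) * a)) * f.comp (X - C (n : k))) := by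
  set Fp : Polynomial (Polynomial k) := f.eval₂ (φ k) (X + C (X : Polynomial k)) with hFp
  set Fm : Polynomial (Polynomial k) := f.eval₂ (φ k) (C (X : Polynomial k) - X) with hFm
  have hFpd : Fp.natDegree ≤ f.natDegree := natDegree_eval₂_le _ (by
    refine (natDegree_add_le _ _).trans ?_
    simp [natDegree_X]) f
  have hFmd : Fm.natDegree ≤ f.natDegree := natDegree_eval₂_le _ (by
    refine (natDegree_sub_le _ _).trans ?_
    simp [natDegree_X]) f
  refine ⟨(C (X : Polynomial k) + C (C a) * X) * Fp,
    -((C (X : Polynomial k) - C (C a) * X) * Fm), ?_, ?_, ?_, ?_⟩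
  · refine (natDegree_mul_le).trans ?_
    have h1 : (C (X : Polynomial k) + C (C a) * X).natDegree ≤ 1 := by
      refine (natDegree_add_le _ _).trans ?_
      simp only [natDegree_C, max_le_iff]
      exact ⟨Nat.zero_le 1, (natDegree_C_mul_le _ _).trans natDegree_X_le⟩
    omega
  · rw [natDegree_neg]
    refine (natDegree_mul_le).trans ?_
    have h1 : (C (X : Polynomial k) - C (C a) * X).natDegree ≤ 1 := by
      refine (natDegree_sub_le _ _).trans ?_
      simp only [natDegree_C, max_le_iff]
      exact ⟨Nat.zero_le 1, (natDegree_C_mul_le _ _).trans natDegree_X_le⟩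
    omega
  · rw [add_mul, coeff_add, coeff_C_mul, mul_assoc, coeff_C_mul, coeff_X_mul,
      coeff_eq_zero_of_natDegree_lt (lt_of_le_of_lt hFpd (Nat.lt_succ_self _)), mul_zero,
      zero_add, hFp, coeff_eval₂_top _ hf, ← C_mul]
  · intro n
    have e1 : ((C (X : Polynomial k) + C (C a) * X) * Fp).eval (C (n : k)) =
        (X + C ((n : k) * a)) * f.comp (X + C (n : k)) := by
      rw [eval_mul, eval_add, eval_C, eval_mul, eval_C, eval_X, hFp, eval_eval₂,
        eval_add, eval_C, eval_X, add_comm (C (n : k)) (X : Polynomial k),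
        ← C_mul, mul_comm a (n : k)]
    have e2 : (-((C (X : Polynomial k) - C (C a) * X) * Fm)).eval (C (n : k)) =
        -((X - C ((n : k) * a)) * f.comp (X - C (n : k))) := by
      rw [eval_neg, eval_mul, eval_sub, eval_C, eval_mul, eval_C, eval_X, hFm, eval_eval₂,
        eval_sub, eval_C, eval_X, ← C_mul, mul_comm a (n : k)]
    rw [e1, e2, smul_neg, inv_pow, ← sub_eq_add_neg]

lemma pow_step (lam a : k) (j : ℕ) :
    (lam • ((X + C a) * (X + C (1:k)) ^ j) - lam⁻¹ • ((X - C a) * (X - C (1:k)) ^ j)).natDegree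
      ≤ j + 1 ∧
    (lam • ((X + C a) * (X + C (1:k)) ^ j)
      - lam⁻¹ • ((X - C a) * (X - C (1:k)) ^ j)).coeff (j + 1) = lam - lam⁻¹ := by
  have hratP : ((X + C a) * (X + C (1:k)) ^ j : Polynomial k) =
      (X + C a) * (X + C (1:k)) ^ j := rfl
  have hmP : ((X + C a) * (X + C (1:k)) ^ j : Polynomial k).Monic :=
    (monic_X_add_C a).mul ((monic_X_add_C (1:k)).pow j)
  have hQ : ((X - C a) * (X - C (1:k)) ^ j : Polynomial k) =
      (X + C (-a)) * (X + C (-1:k)) ^ j := by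
    rw [sub_eq_add_neg, ← C_neg, sub_eq_add_neg (X : Polynomial k) (C (1:k)), ← C_neg]
  have hmQ : ((X - C a) * (X - C (1:k)) ^ j : Polynomial k).Monic := by
    rw [hQ]; exact (monic_X_add_C (-a)).mul ((monic_X_add_C (-1:k)).pow j)
  have hdP : ((X + C a) * (X + C (1:k)) ^ j : Polynomial k).natDegree = j + 1 := by
    rw [(monic_X_add_C a).natDegree_mul ((monic_X_add_C (1:k)).pow j),
      Monic.natDegree_pow (monic_X_add_C (1:k)), natDegree_X_add_C, natDegree_X_add_C,
      mul_one]
    omega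
  have hdQ : ((X - C a) * (X - C (1:k)) ^ j : Polynomial k).natDegree = j + 1 := by
    rw [hQ, (monic_X_add_C (-a)).natDegree_mul ((monic_X_add_C (-1:k)).pow j),
      Monic.natDegree_pow (monic_X_add_C (-1:k)), natDegree_X_add_C, natDegree_X_add_C,
      mul_one]
    omega
  have hcP : ((X + C a) * (X + C (1:k)) ^ j : Polynomial k).coeff (j + 1) = 1 := by
    have := hmP.coeff_natDegree; rwa [hdP] at this
  have hcQ : ((X - C a) * (X - C (1:k)) ^ j : Polynomial k).coeff (j + 1) = 1 := by
    have := hmQ.coeff_natDegree; rwa [hdQ] at this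
  constructor
  · refine (natDegree_sub_le _ _).trans (max_le ?_ ?_)
    · exact (natDegree_smul_le _ _).trans (le_of_eq hdP)
    · exact (natDegree_smul_le _ _).trans (le_of_eq hdQ)
  · rw [coeff_sub, coeff_smul, coeff_smul, hcP, hcQ, smul_eq_mul, smul_eq_mul,
      mul_one, mul_one]

end OmegaIrr

/-- Let `k` be a field of characteristic zero, `lam ∈ k` with `lam ≠ 0, 1, -1`, and `a ∈ k` with
`a ≠ 0`.  `Ω(lam,a)` is the `O`-module with underlying space `k[X]` and action
`O_n · f(X) = lamⁿ (X + n·a) f(X + n) − lam⁻ⁿ (X − n·a) f(X − n)` for `n ≥ 1`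
(here `act n f` records this action; since `O` is spanned by the `O_n`, `n ≥ 1`, subspaces
stable under all `act n` are exactly the `O`-submodules).  Then `Ω(lam,a)` is irreducible:
it is nonzero and has no `O`-submodules other than `0` and itself. -/
theorem Omega_module_irreducible
    {k : Type*} [Field k] [CharZero k]
    (lam a : k) (hlam0 : lam ≠ 0) (hlam1 : lam ≠ 1) (hlamm1 : lam ≠ -1) (ha : a ≠ 0)
    (act : ℕ → Polynomial k → Polynomial k)
    (hact : ∀ (n : ℕ) (f : Polynomial k), act n f =
      lam ^ n • ((Polynomial.X + Polynomial.C ((n : k) * a)) *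
          f.comp (Polynomial.X + Polynomial.C (n : k)))
        - (lam ^ n)⁻¹ • ((Polynomial.X - Polynomial.C ((n : k) * a)) *
          f.comp (Polynomial.X - Polynomial.C (n : k)))) :
    Nontrivial (Polynomial k) ∧
      ∀ N : Submodule k (Polynomial k),
        (∀ n : ℕ, 1 ≤ n → ∀ f ∈ N, act n f ∈ N) → N = ⊥ ∨ N = ⊤ := by
  open Polynomial OmegaIrr in
  refine ⟨inferInstance, fun N hN => ?_⟩
  rcases eq_or_ne N ⊥ with hbot | hbot
  · exact Or.inl hbot
  right
  obtain ⟨f, hfN, hf0⟩ := (Submodule.ne_bot_iff N).mp hbot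
  -- β := lam - lam⁻¹ ≠ 0
  have hβ : lam - lam⁻¹ ≠ 0 := by
    rw [sub_ne_zero]
    intro h
    have h2 : lam * lam = 1 := by
      nth_rewrite 2 [h]
      exact mul_inv_cancel₀ hlam0
    rcases mul_self_eq_one_iff.mp h2 with h3 | h3
    · exact hlam1 h3
    · exact hlamm1 h3
  obtain ⟨A0, B0, hA0d, hB0d, hA0c, hseq⟩ := setup a lam f hf0
  have hmem0 : ∀ n : ℕ, 1 ≤ n →
      lam ^ n • A0.eval (C (n : k)) + (lam⁻¹) ^ n • B0.eval (C (n : k)) ∈ N := by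
    intro n hn
    rw [hseq n, ← hact n f]
    exact hN n hn f hfN
  obtain ⟨A', c, hc, hmem', hcoeff⟩ :=
    phase1 lam hlam0 hβ N (f.natDegree + 2) A0 B0 (by omega) hmem0
  obtain ⟨hA'd, hA'c⟩ := hcoeff (f.natDegree + 1) hA0d
  have hconst : A'.coeff (f.natDegree + 1) ∈ N :=
    coeff_mem_of_eval_mem N (lt_of_le_of_lt hA'd (by omega : f.natDegree + 1 < f.natDegree + 2))
      hmem' _
  rw [hA'c, hA0c, smul_C, smul_eq_mul] at hconst
  have hγ : c * (a * f.leadingCoeff) ≠ 0 :=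
    mul_ne_zero hc (mul_ne_zero ha (leadingCoeff_ne_zero.mpr hf0))
  have hone : (1 : Polynomial k) ∈ N := by
    have h2 := N.smul_mem (c * (a * f.leadingCoeff))⁻¹ hconst
    rwa [smul_C, smul_eq_mul, inv_mul_cancel₀ hγ, C_1] at h2
  -- all monomials lie in N
  have hXpow : ∀ m : ℕ, (X : Polynomial k) ^ m ∈ N := by
    intro m
    induction m using Nat.strong_induction_on with
    | _ m ih =>
      match m with
      | 0 => simpa using hone
      | (j + 1) =>
        have hgN : act 1 ((X : Polynomial k) ^ j) ∈ N :=
          hN 1 le_rfl _ (ih j (by omega))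
        have hg : act 1 ((X : Polynomial k) ^ j) =
            lam • ((X + C a) * (X + C (1:k)) ^ j)
              - lam⁻¹ • ((X - C a) * (X - C (1:k)) ^ j) := by
          rw [hact]
          simp only [pow_one, Nat.cast_one, one_mul, X_pow_comp]
        rw [hg] at hgN
        obtain ⟨hdeg, hcf⟩ := pow_step lam a j
        set g : Polynomial k := lam • ((X + C a) * (X + C (1:k)) ^ j)
          - lam⁻¹ • ((X - C a) * (X - C (1:k)) ^ j) with hgdef
        have hsum : (∑ i ∈ Finset.range (j + 1), g.coeff i • (X : Polynomial k) ^ i) ∈ N := by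
          refine Submodule.sum_mem _ fun i hi => Submodule.smul_mem _ _ ?_
          exact ih i (by simp only [Finset.mem_range] at hi; omega)
        have hrepr : g = ∑ i ∈ Finset.range (j + 2), g.coeff i • (X : Polynomial k) ^ i := by
          conv_lhs => rw [as_sum_range' g (j + 2) (by omega)]
          exact Finset.sum_congr rfl fun i _ => (smul_X_eq_monomial).symm
        have hXmem : (lam - lam⁻¹) • (X : Polynomial k) ^ (j + 1) ∈ N := by
          have heq : g - (∑ i ∈ Finset.range (j + 1), g.coeff i • (X : Polynomial k) ^ i) =
              (lam - lam⁻¹) • (X : Polynomial k) ^ (j + 1) := by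
            nth_rewrite 1 [hrepr]
            rw [Finset.sum_range_succ, add_sub_cancel_left, hcf]
          rw [← heq]
          exact Submodule.sub_mem _ hgN hsum
        have h3 := N.smul_mem (lam - lam⁻¹)⁻¹ hXmem
        rwa [smul_smul, inv_mul_cancel₀ hβ, one_smul] at h3
  rw [Submodule.eq_top_iff']
  intro p
  have hp := as_sum_range' p (p.natDegree + 1) (Nat.lt_succ_self _)
  rw [hp]
  refine Submodule.sum_mem _ fun i _ => ?_
  rw [← smul_X_eq_monomial]
  exact N.smul_mem _ (hXpow i)
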